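/- Let q ∈ (0,1), n ≥ 1 an integer, and let a, b be real numbers with 0 < aq < 1 and b < 0. Then p_n(x; a, b) ≺ p_n(x; a, q²b): both degree-n polynomials have all zeros real, simple and positive, and, listing zeros in increasing order, λ_1(p_n(·;a,b)) < λ_1(p_n(·;a,q²b)) < λ_2(p_n(·;a,b)) < λ_2(p_n(·;a,q²b)) < ⋯ < λ_n(p_n(·;a,b)) < λ_n(p_n(·;a,q²b)). -/

import Mathlib

set_option linter.unusedSectionVars false
set_option linter.unusedVariables false
set_option maxHeartbeats 800000



/-- The q-Pochhammer symbol `(a;q)_k = ∏_{j=0}^{k-1} (1 - a q^j)`. -/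
noncomputable def qPoch (q a : ℝ) (k : ℕ) : ℝ :=
  ∏ j ∈ Finset.range k, (1 - a * q ^ j)

/-- The little q-Jacobi polynomial
`p_n(x; a, b) = ∑_{k=0}^{n} [(q^{−n};q)_k (a b q^{n+1};q)_k / ((a q;q)_k (q;q)_k)] (q x)^k`. -/
noncomputable def littleQJacobi (q a b : ℝ) (n : ℕ) : Polynomial ℝ :=
  ∑ k ∈ Finset.range (n + 1),
    Polynomial.C (qPoch q (q ^ (-(n : ℤ))) k * qPoch q (a * b * q ^ (n + 1)) k /
      (qPoch q (a * q) k * qPoch q q k)) * (Polynomial.C q * Polynomial.X) ^ k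


namespace LQJ
open Polynomial Finset

lemma qPoch_zero (q c : ℝ) : qPoch q c 0 = 1 := by simp [qPoch]

lemma qPoch_succ_back (q c : ℝ) (k : ℕ) :
    qPoch q c (k + 1) = qPoch q c k * (1 - c * q ^ k) := by
  simp [qPoch, Finset.prod_range_succ]

lemma qPoch_succ_front (q c : ℝ) (k : ℕ) :
    qPoch q c (k + 1) = (1 - c) * qPoch q (c * q) k := by
  rw [qPoch, Finset.prod_range_succ']
  simp only [pow_zero, mul_one, qPoch]
  rw [mul_comm]
  congr 1
  apply Finset.prod_congr rfl
  intro j _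
  ring

lemma qPoch_pos (q c : ℝ) (k : ℕ) (h : ∀ j, j < k → c * q ^ j < 1) : 0 < qPoch q c k := by
  apply Finset.prod_pos
  intro j hj
  have := h j (Finset.mem_range.1 hj)
  linarith

/-- coefficient function -/
noncomputable def d (q a b : ℝ) (m k : ℕ) : ℝ :=
  qPoch q (q ^ (-(m : ℤ))) k * qPoch q (a * b * q ^ (m + 1)) k /
      (qPoch q (a * q) k * qPoch q q k)

lemma qPoch_neg_pow_eq_zero (q : ℝ) (hq : q ≠ 0) (m k : ℕ) (h : m < k) :
    qPoch q (q ^ (-(m : ℤ))) k = 0 := by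
  apply Finset.prod_eq_zero (Finset.mem_range.2 h)
  rw [show q ^ (-(m:ℤ)) * q ^ m = 1 by
    rw [← zpow_natCast q m, ← zpow_add₀ hq]; simp]
  ring

lemma coeff_littleQJacobi (q a b : ℝ) (hq : q ≠ 0) (m k : ℕ) :
    (littleQJacobi q a b m).coeff k = d q a b m k * q ^ k := by
  rw [show littleQJacobi q a b m = ∑ j ∈ Finset.range (m+1),
      Polynomial.C (d q a b m j) * (Polynomial.C q * Polynomial.X) ^ j from rfl,
    Polynomial.finset_sum_coeff]
  have : ∀ j ∈ Finset.range (m+1),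
      (Polynomial.C (d q a b m j) * (Polynomial.C q * Polynomial.X) ^ j).coeff k
      = if j = k then d q a b m j * q ^ j else 0 := by
    intro j _
    rw [mul_pow, ← Polynomial.C_pow, ← mul_assoc, ← Polynomial.C_mul,
      Polynomial.coeff_C_mul, Polynomial.coeff_X_pow]
    by_cases hh : k = j <;> simp [hh, eq_comm]
  rw [Finset.sum_congr rfl this, Finset.sum_ite_eq' (Finset.range (m+1)) k]
  by_cases hk : k ∈ Finset.range (m+1)
  · simp [hk]
  · simp only [hk, if_false]
    have hmk : m < k := by simpa using Nat.lt_of_succ_le (not_lt.1 (by simpa [Finset.mem_range] using hk))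
    rw [d, qPoch_neg_pow_eq_zero q hq m k hmk]
    simp

section Main
variable {q a : ℝ} (hq0 : 0 < q) (hq1 : q < 1) (ha0 : 0 < a * q) (ha1 : a * q < 1)

include hq0 ha0 in
lemma a_pos : 0 < a := by
  nlinarith

include hq0 hq1 in
lemma qlt1 (j : ℕ) (hj : 1 ≤ j) : q ^ j < 1 :=
  pow_lt_one₀ (le_of_lt hq0) hq1 (by omega)

include hq0 hq1 ha0 ha1 in
lemma one_sub_aq_pos (j : ℕ) (hj : 1 ≤ j) : 0 < 1 - a * q ^ j := by
  have h1 : a * q ^ j ≤ a * q ^ 1 := by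
    apply mul_le_mul_of_nonneg_left _ (le_of_lt (a_pos hq0 ha0))
    exact pow_le_pow_of_le_one (le_of_lt hq0) (le_of_lt hq1) hj
  simp only [pow_one] at h1
  linarith

include hq0 hq1 ha0 ha1 in
lemma qPoch_aq_pos (k : ℕ) : 0 < qPoch q (a * q) k := by
  apply qPoch_pos
  intro j _
  have h := one_sub_aq_pos hq0 hq1 ha0 ha1 (j+1) (by omega)
  have e : a * q * q ^ j = a * q ^ (j+1) := by ring
  rw [e]
  linarith

include hq0 hq1 in
lemma qPoch_q_pos (k : ℕ) : 0 < qPoch q q k := by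
  apply qPoch_pos
  intro j _
  have : q * q ^ j = q ^ (j+1) := by ring
  rw [this]
  exact qlt1 hq0 hq1 (j+1) (by omega)

include hq0 in
lemma qPoch_nonpos_pos {c : ℝ} (hc : c ≤ 0) (k : ℕ) : 0 < qPoch q c k := by
  apply qPoch_pos
  intro j _
  have : 0 ≤ -c * q ^ j := mul_nonneg (by linarith) (by positivity)
  nlinarith

include hq0 hq1 ha0 ha1 in
/-- positivity of the `(abq^{m+1};q)_k`-type factors for b < 0 -/
lemma qPoch_ab_pos {b : ℝ} (hb : b < 0) (m : ℕ) (k : ℕ) :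
    0 < qPoch q (a * b * q ^ m) k := by
  apply qPoch_nonpos_pos hq0
  have : a * b ≤ 0 := le_of_lt (mul_neg_of_pos_of_neg (a_pos hq0 ha0) hb)
  exact mul_nonpos_of_nonpos_of_nonneg this (by positivity)

include hq0 hq1 in
lemma neg_pow_factor_pos (m j : ℕ) (hj : j < m) : 0 < q ^ ((j:ℤ) - m) - 1 := by
  have h1 : q ^ ((j:ℤ) - (m:ℤ)) = (q ^ (m - j : ℕ))⁻¹ := by
    rw [show (j:ℤ) - (m:ℤ) = -((m - j : ℕ) : ℤ) by omega, zpow_neg, zpow_natCast]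
  rw [h1]
  have h2 : q ^ (m - j : ℕ) < 1 := qlt1 hq0 hq1 _ (by omega)
  have h3 : (0:ℝ) < q ^ (m - j : ℕ) := by positivity
  have h4 : q ^ (m-j:ℕ) * (q ^ (m-j:ℕ))⁻¹ = 1 := mul_inv_cancel₀ (ne_of_gt h3)
  have h5 : (0:ℝ) < (q ^ (m-j:ℕ))⁻¹ := by positivity
  nlinarith

include hq0 hq1 ha0 ha1 in
lemma d_top_sign {b : ℝ} (hb : b < 0) (m : ℕ) :
    0 < (-1) ^ m * d q a b m m := by
  rw [d]
  have h1 : (-1:ℝ)^m * qPoch q (q ^ (-(m:ℤ))) m = ∏ j ∈ Finset.range m, (q ^ ((j:ℤ) - m) - 1) := by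
    rw [qPoch, show ((-1:ℝ))^m = ∏ _j ∈ Finset.range m, (-1:ℝ) by simp, ← Finset.prod_mul_distrib]
    apply Finset.prod_congr rfl
    intro j hj
    have e : q ^ (-(m:ℤ)) * q ^ j = q ^ ((j:ℤ) - m) := by
      rw [← zpow_natCast q j, ← zpow_add₀ (ne_of_gt hq0)]
      congr 1; omega
    rw [e]; ring
  have h2 : 0 < ∏ j ∈ Finset.range m, (q ^ ((j:ℤ) - m) - 1) :=
    Finset.prod_pos (fun j hj => neg_pow_factor_pos hq0 hq1 m j (Finset.mem_range.1 hj))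
  have h3 := qPoch_ab_pos hq0 hq1 ha0 ha1 hb (m+1) m
  have h4 := qPoch_aq_pos hq0 hq1 ha0 ha1 m
  have h5 := qPoch_q_pos hq0 hq1 m
  have e2 : (-1:ℝ)^m * (qPoch q (q ^ (-(m:ℤ))) m * qPoch q (a * b * q ^ (m + 1)) m /
      (qPoch q (a * q) m * qPoch q q m))
      = ((-1:ℝ)^m * qPoch q (q ^ (-(m:ℤ))) m) * qPoch q (a * b * q ^ (m + 1)) m /
      (qPoch q (a * q) m * qPoch q q m) := by ring
  rw [e2, h1]
  exact div_pos (mul_pos h2 h3) (mul_pos h4 h5)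

include hq0 hq1 ha0 ha1 in
lemma coeff_top_sign {b : ℝ} (hb : b < 0) (m : ℕ) :
    0 < (-1) ^ m * (littleQJacobi q a b m).coeff m := by
  rw [coeff_littleQJacobi q a b (ne_of_gt hq0)]
  have h := d_top_sign hq0 hq1 ha0 ha1 hb m
  have hqm : (0:ℝ) < q ^ m := by positivity
  calc (0:ℝ) < ((-1)^m * d q a b m m) * q ^ m := mul_pos h hqm
  _ = (-1)^m * (d q a b m m * q ^ m) := by ring

include hq0 hq1 ha0 ha1 in
lemma natDegree_lqj {b : ℝ} (hb : b < 0) (m : ℕ) :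
    (littleQJacobi q a b m).natDegree = m := by
  have h := coeff_top_sign hq0 hq1 ha0 ha1 hb m
  have hco : (littleQJacobi q a b m).coeff m ≠ 0 := by
    intro h0
    rw [h0, mul_zero] at h
    exact lt_irrefl 0 h
  refine le_antisymm ?_ (Polynomial.le_natDegree_of_ne_zero hco)
  rw [Polynomial.natDegree_le_iff_coeff_eq_zero]
  intro k hk
  rw [coeff_littleQJacobi q a b (ne_of_gt hq0), d,
    qPoch_neg_pow_eq_zero q (ne_of_gt hq0) m k hk]
  simp

include hq0 hq1 ha0 ha1 in
lemma leadingCoeff_sign {b : ℝ} (hb : b < 0) (m : ℕ) :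
    0 < (-1) ^ m * (littleQJacobi q a b m).leadingCoeff := by
  rw [Polynomial.leadingCoeff, natDegree_lqj hq0 hq1 ha0 ha1 hb m]
  exact coeff_top_sign hq0 hq1 ha0 ha1 hb m

include hq0 hq1 ha0 ha1 in
lemma lqj_ne_zero {b : ℝ} (hb : b < 0) (m : ℕ) : littleQJacobi q a b m ≠ 0 := by
  intro h0
  have h := leadingCoeff_sign hq0 hq1 ha0 ha1 hb m
  rw [h0] at h
  simp at h

lemma eval_zero_lqj (b : ℝ) (hq : q ≠ 0) (m : ℕ) : (littleQJacobi q a b m).eval 0 = 1 := by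
  rw [← Polynomial.coeff_zero_eq_eval_zero, coeff_littleQJacobi q a b hq, d]
  simp [qPoch_zero]

lemma prod_neg_sign (s : Finset ℕ) (f : ℕ → ℝ) (h : ∀ i ∈ s, f i < 0) :
    0 < (-1) ^ s.card * ∏ i ∈ s, f i := by
  have h1 : 0 < ∏ i ∈ s, (-(f i)) := Finset.prod_pos fun i hi => by linarith [h i hi]
  have h2 : ∏ i ∈ s, (-(f i)) = (-1) ^ s.card * ∏ i ∈ s, f i := by
    rw [← Finset.prod_const (-1 : ℝ), ← Finset.prod_mul_distrib]
    apply Finset.prod_congr rfl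
    intros; ring
  linarith [h2 ▸ h1]

/-- Sign of a real polynomial at a point, given the location of the point among the roots. -/
lemma sign_eval_of_roots (g : Polynomial ℝ) (m : ℕ) (x : Fin m → ℝ)
    (hdeg : g.natDegree = m) (hroots : g.roots = ↑(List.ofFn x))
    (hlead : 0 < (-1) ^ m * g.leadingCoeff) (t : ℝ) (j : ℕ) (hjm : j ≤ m)
    (hbelow : ∀ i : Fin m, (i : ℕ) < j → x i < t)
    (habove : ∀ i : Fin m, j ≤ (i : ℕ) → t < x i) :
    0 < (-1) ^ j * Polynomial.eval t g := by
  have hg : g ≠ 0 := by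
    intro h0
    rw [h0] at hlead
    simp at hlead
  have hsplits : g.Splits := by
    rw [Polynomial.splits_iff_card_roots, hroots, hdeg]
    simp
  have hfact := Polynomial.Splits.eq_prod_roots hsplits
  have heval : Polynomial.eval t g = g.leadingCoeff * ∏ i : Fin m, (t - x i) := by
    conv_lhs => rw [hfact]
    rw [Polynomial.eval_mul, Polynomial.eval_C, hroots]
    congr 1
    rw [Polynomial.eval_multiset_prod, Multiset.map_map]
    rw [show Multiset.map ((Polynomial.eval t) ∘ (fun a => Polynomial.X - Polynomial.C a))
          ((List.ofFn x : List ℝ) : Multiset ℝ)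
        = ((List.ofFn x).map (fun a => t - a) : List ℝ) by
      simp [Multiset.map_coe, Function.comp]]
    rw [Multiset.prod_coe, List.map_ofFn, List.prod_ofFn]
    rfl
  -- the product over i with x i > t contributes sign (-1)^(m-j)
  set F : ℕ → ℝ := fun i => t - (if h : i < m then x ⟨i, h⟩ else 0) with hF
  have hP : ∏ i : Fin m, (t - x i) = ∏ i ∈ Finset.range m, F i := by
    rw [← Fin.prod_univ_eq_prod_range]
    apply Finset.prod_congr rfl
    intro i _
    simp [hF, i.isLt]
  have hsplit : (∏ i ∈ Finset.range j, F i) * ∏ i ∈ Finset.Ico j m, F i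
      = ∏ i ∈ Finset.range m, F i := Finset.prod_range_mul_prod_Ico F hjm
  have hpos1 : 0 < ∏ i ∈ Finset.range j, F i := by
    apply Finset.prod_pos
    intro i hi
    have him : i < m := lt_of_lt_of_le (Finset.mem_range.1 hi) hjm
    have := hbelow ⟨i, him⟩ (Finset.mem_range.1 hi)
    simp only [hF, dif_pos him]
    linarith
  have hpos2 : 0 < (-1 : ℝ) ^ (m - j) * ∏ i ∈ Finset.Ico j m, F i := by
    have hcard : (Finset.Ico j m).card = m - j := Nat.card_Ico j m
    rw [← hcard]
    apply prod_neg_sign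
    intro i hi
    obtain ⟨h1, h2⟩ := Finset.mem_Ico.1 hi
    have := habove ⟨i, h2⟩ h1
    simp only [hF, dif_pos h2]
    linarith
  have hsign : (-1 : ℝ) ^ m * (-1 : ℝ) ^ (m - j) = (-1 : ℝ) ^ (2 * (m - j)) * (-1) ^ j := by
    rw [← pow_add, ← pow_add]
    congr 1
    omega
  have key : 0 < ((-1 : ℝ) ^ m * g.leadingCoeff) *
      ((-1 : ℝ) ^ (m - j) * ∏ i ∈ Finset.Ico j m, F i) * (∏ i ∈ Finset.range j, F i) :=
    mul_pos (mul_pos hlead hpos2) hpos1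
  have expand : ((-1 : ℝ) ^ m * g.leadingCoeff) *
      ((-1 : ℝ) ^ (m - j) * ∏ i ∈ Finset.Ico j m, F i) * (∏ i ∈ Finset.range j, F i)
      = ((-1 : ℝ) ^ (2 * (m - j))) * ((-1) ^ j * Polynomial.eval t g) := by
    rw [heval, hP, ← hsplit]
    calc ((-1 : ℝ) ^ m * g.leadingCoeff) *
        ((-1 : ℝ) ^ (m - j) * ∏ i ∈ Finset.Ico j m, F i) * (∏ i ∈ Finset.range j, F i)
        = ((-1 : ℝ) ^ m * (-1 : ℝ) ^ (m - j)) * (g.leadingCoeff *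
          ((∏ i ∈ Finset.range j, F i) * ∏ i ∈ Finset.Ico j m, F i)) := by ring
    _ = _ := by rw [hsign]; ring
  rw [expand] at key
  have h2m : (0:ℝ) < (-1 : ℝ) ^ (2 * (m - j)) := by
    rw [pow_mul]
    norm_num
  nlinarith [key, h2m]

lemma exists_root_Ioo (f : Polynomial ℝ) (u v : ℝ) (huv : u < v)
    (h : Polynomial.eval u f * Polynomial.eval v f < 0) :
    ∃ c ∈ Set.Ioo u v, Polynomial.eval c f = 0 := by
  have hcont : ContinuousOn (fun x => Polynomial.eval x f) (Set.Icc u v) :=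
    (Polynomial.continuous f).continuousOn
  rcases lt_or_ge (Polynomial.eval u f) 0 with hu | hu
  · have hv : 0 < Polynomial.eval v f := by nlinarith
    have := intermediate_value_Ioo (le_of_lt huv) hcont
    have h0 : (0:ℝ) ∈ Set.Ioo (Polynomial.eval u f) (Polynomial.eval v f) := ⟨hu, hv⟩
    obtain ⟨c, hc, hc0⟩ := this h0
    exact ⟨c, hc, hc0⟩
  · have hu' : 0 < Polynomial.eval u f := by
      rcases lt_or_eq_of_le hu with h' | h'
      · exact h'
      · rw [← h'] at h; simp at h
    have hv : Polynomial.eval v f < 0 := by nlinarith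
    have := intermediate_value_Ioo' (le_of_lt huv) hcont
    have h0 : (0:ℝ) ∈ Set.Ioo (Polynomial.eval v f) (Polynomial.eval u f) := ⟨hv, hu'⟩
    obtain ⟨c, hc, hc0⟩ := this h0
    exact ⟨c, hc, hc0⟩

lemma strictMono_fin {n : ℕ} (x : Fin n → ℝ)
    (h : ∀ (i : ℕ) (hi : i + 1 < n), x ⟨i, Nat.lt_of_succ_lt hi⟩ < x ⟨i + 1, hi⟩) : StrictMono x := by
  have key : ∀ (j : ℕ) (hj : j < n) (i : ℕ) (hi : i < n), i < j → x ⟨i, hi⟩ < x ⟨j, hj⟩ := by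
    intro j
    induction j with
    | zero => omega
    | succ k ih =>
      intro hj i hi hij
      rcases Nat.lt_or_ge i k with h' | h'
      · exact lt_trans (ih (by omega) i hi h') (h k hj)
      · have : i = k := by omega
        subst this
        exact h i hj
  intro i j hij
  have := key (j : ℕ) j.isLt (i : ℕ) i.isLt hij
  simpa using this

lemma workhorse (f : Polynomial ℝ) (n : ℕ) (hn : 0 < n) (hdeg : f.natDegree = n)
    (h0 : 0 < Polynomial.eval 0 f) (l r : Fin n → ℝ) (hl0 : 0 < l ⟨0, hn⟩)
    (hlr : ∀ i, l i ≤ r i)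
    (hcons : ∀ (i : ℕ) (h : i + 1 < n), r ⟨i, Nat.lt_of_succ_lt h⟩ < l ⟨i + 1, h⟩)
    (hsl : ∀ i : Fin n, 0 < (-1) ^ ((i : ℕ) + 1) * Polynomial.eval (l i) f)
    (hsr : ∀ i : Fin n, 0 < (-1) ^ ((i : ℕ) + 1) * Polynomial.eval (r i) f) :
    ∃ x : Fin n → ℝ, StrictMono x ∧ f.roots = ↑(List.ofFn x) ∧ (∀ i, 0 < x i) ∧
      (∀ i, x i < l i) ∧ ∀ (i : ℕ) (h : i + 1 < n), r ⟨i, Nat.lt_of_succ_lt h⟩ < x ⟨i + 1, h⟩ := by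
  have hf0 : f ≠ 0 := by
    intro hz
    rw [hz] at hdeg
    simp at hdeg
    omega
  -- previous endpoint
  set prev : Fin n → ℝ := fun i => if h : (i : ℕ) = 0 then 0 else r ⟨(i : ℕ) - 1, by omega⟩
    with hprev
  have hprevlt : ∀ i, prev i < l i := by
    intro i
    by_cases h : (i : ℕ) = 0
    · simp only [hprev, dif_pos h]
      have hi0 : i = ⟨0, hn⟩ := Fin.ext h
      rw [hi0]
      exact hl0
    · simp only [hprev, dif_neg h]
      have h2 : ((i : ℕ) - 1) + 1 < n := by omega
      have hco := hcons ((i : ℕ) - 1) h2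
      have e : (⟨(i : ℕ) - 1 + 1, h2⟩ : Fin n) = i := Fin.ext (by simp; omega)
      rw [e] at hco
      exact hco
  have hsignprev : ∀ i : Fin n, 0 < (-1) ^ (i : ℕ) * Polynomial.eval (prev i) f := by
    intro i
    by_cases h : (i : ℕ) = 0
    · simp only [hprev, dif_pos h, h, pow_zero, one_mul]
      exact h0
    · simp only [hprev, dif_neg h]
      have hh : 0 < (-1:ℝ) ^ (((i:ℕ) - 1) + 1) * Polynomial.eval (r ⟨(i:ℕ) - 1, by omega⟩) f :=
        hsr ⟨(i : ℕ) - 1, by omega⟩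
      rw [show ((i:ℕ) - 1) + 1 = (i:ℕ) by omega] at hh
      exact hh
  have hopp : ∀ i : Fin n, Polynomial.eval (prev i) f * Polynomial.eval (l i) f < 0 := by
    intro i
    have h1 := hsignprev i
    have h2 := hsl i
    have h3 : ((-1:ℝ) ^ (i:ℕ)) * ((-1:ℝ) ^ ((i:ℕ)+1)) = -1 := by
      rw [← pow_add]
      have : (i:ℕ) + ((i:ℕ)+1) = 2 * (i:ℕ) + 1 := by omega
      rw [this, pow_add, pow_mul]
      norm_num
    nlinarith [h1, h2]
  choose x hx hxroot using fun i : Fin n =>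
    exists_root_Ioo f (prev i) (l i) (hprevlt i) (hopp i)
  have hmono : StrictMono x := by
    apply strictMono_fin
    intro i hi
    have h1 : x ⟨i, by omega⟩ < l ⟨i, by omega⟩ := (hx ⟨i, by omega⟩).2
    have h2 : l ⟨i, by omega⟩ ≤ r ⟨i, by omega⟩ := hlr _
    have h3 : prev ⟨i + 1, hi⟩ = r ⟨i, by omega⟩ := by
      simp only [hprev, dif_neg (by simp : ¬ (i+1) = 0)]
      exact congrArg r (Fin.ext (by simp))
    have h4 : prev ⟨i+1, hi⟩ < x ⟨i+1, hi⟩ := (hx ⟨i+1, hi⟩).1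
    rw [h3] at h4
    linarith
  have hxpos : ∀ i, 0 < x i := by
    intro i
    have h00 : 0 < x ⟨0, hn⟩ := by
      have := (hx ⟨0, hn⟩).1
      simpa [hprev] using this
    rcases Nat.eq_zero_or_pos (i : ℕ) with h | h
    · have : i = ⟨0, hn⟩ := by ext; exact h
      rw [this]; exact h00
    · have : (⟨0, hn⟩ : Fin n) < i := by
        rw [Fin.lt_def]; simpa using h
      exact lt_trans h00 (hmono this)
  have hroots : f.roots = ↑(List.ofFn x) := by
    have hnodup : (List.ofFn x).Nodup := by
      rw [List.nodup_ofFn]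
      exact hmono.injective
    have hle : (↑(List.ofFn x) : Multiset ℝ) ≤ f.roots := by
      rw [Multiset.le_iff_count]
      intro c
      by_cases hc : c ∈ (↑(List.ofFn x) : Multiset ℝ)
      · have h1 : Multiset.count c ↑(List.ofFn x) = 1 := by
          rw [Multiset.count_eq_one_of_mem]
          · exact hnodup
          · exact hc
        rw [h1]
        rw [Polynomial.count_roots]
        rw [Nat.one_le_iff_ne_zero, ← Nat.pos_iff_ne_zero,
          Polynomial.rootMultiplicity_pos hf0]
        obtain ⟨i, rfl⟩ := by simpa [List.mem_ofFn] using hc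
        exact hxroot i
      · rw [Multiset.count_eq_zero_of_notMem hc]
        omega
    have hcard : Multiset.card f.roots ≤ Multiset.card (↑(List.ofFn x) : Multiset ℝ) := by
      have := f.card_roots'
      rw [hdeg] at this
      simpa using this
    exact (Multiset.eq_of_le_of_card_le hle hcard).symm
  refine ⟨x, hmono, hroots, hxpos, fun i => (hx i).2, ?_⟩
  intro i hi
  have h4 := (hx ⟨i+1, hi⟩).1
  have h3 : prev ⟨i + 1, hi⟩ = r ⟨i, by omega⟩ := by
    simp only [hprev, dif_neg (by simp : ¬ (i+1) = 0)]
    exact congrArg r (Fin.ext (by simp))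
  rw [h3] at h4
  exact h4

include hq0 hq1 ha0 ha1 in
lemma rel_L1 {c : ℝ} (hc : c < 0) (M : ℕ) :
    Polynomial.C (1 - a*c*q^(2*M+3)) * littleQJacobi q a c (M+1)
    = Polynomial.C (1 - a*c*q^(M+2)) * littleQJacobi q a (q*c) (M+1)
      + Polynomial.C (a*c*q^(M+2)*(1-q^(M+1))) * littleQJacobi q a (q*c) M := by
  have hqne : q ≠ 0 := ne_of_gt hq0
  apply Polynomial.ext
  intro k
  simp only [Polynomial.coeff_add, Polynomial.coeff_C_mul,
    coeff_littleQJacobi q a _ hqne]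
  rcases Nat.eq_zero_or_pos k with rfl | hk
  · simp only [pow_zero, mul_one, d, qPoch_zero]
    norm_num
    ring
  · obtain ⟨j, rfl⟩ : ∃ j, k = j + 1 := ⟨k - 1, by omega⟩
    -- canonical atoms
    have hTpos := qPoch_aq_pos hq0 hq1 ha0 ha1 (j+1)
    have hUpos := qPoch_q_pos hq0 hq1 (j+1)
    set T := qPoch q (a*q) (j+1) with hT
    set U := qPoch q q (j+1) with hU
    -- first pochhammer expansions
    have e1 : qPoch q (q ^ (-((M+1:ℕ) : ℤ))) (j+1)
        = (1 - q ^ (-((M+1:ℕ) : ℤ))) * qPoch q (q ^ (-((M+1:ℕ) : ℤ)) * q) j :=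
      qPoch_succ_front q _ j
    have e2 : qPoch q (q ^ (-((M:ℕ) : ℤ))) (j+1)
        = qPoch q (q ^ (-((M+1:ℕ) : ℤ)) * q) j * (1 - q ^ (-((M+1:ℕ) : ℤ)) * q * q ^ j) := by
      have hbase : q ^ (-((M:ℕ) : ℤ)) = q ^ (-((M+1:ℕ) : ℤ)) * q := by
        have h := zpow_add₀ hqne (-((M+1:ℕ) : ℤ)) 1
        rw [zpow_one] at h
        rw [show -((M:ℕ) : ℤ) = -((M+1:ℕ) : ℤ) + 1 by push_cast; ring, h]
      rw [hbase, qPoch_succ_back]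
    set P := qPoch q (q ^ (-((M+1:ℕ) : ℤ)) * q) j with hP
    -- second pochhammer expansions, common base X*q with X = a*c*q^(M+2)
    have e3 : qPoch q (a*c*q^(M+1+1)) (j+1)
        = (1 - a*c*q^(M+2)) * qPoch q (a*c*q^(M+2) * q) j := by
      rw [show (M+1+1) = M+2 from rfl]
      exact qPoch_succ_front q _ j
    have e4 : qPoch q (a*(q*c)*q^(M+1+1)) (j+1)
        = qPoch q (a*c*q^(M+2) * q) j * (1 - a*c*q^(M+2)*q * q^j) := by
      rw [show a*(q*c)*q^(M+1+1) = a*c*q^(M+2)*q by ring, qPoch_succ_back]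
    have e5 : qPoch q (a*(q*c)*q^(M+1)) (j+1)
        = (1 - a*c*q^(M+2)) * qPoch q (a*c*q^(M+2) * q) j := by
      rw [show a*(q*c)*q^(M+1) = a*c*q^(M+2) by ring]
      exact qPoch_succ_front q _ j
    set S := qPoch q (a*c*q^(M+2) * q) j with hS
    rw [d, d, d, e1, e2, e3, e4, e5]
    -- now a scalar identity; clear denominators
    have hY : q ^ (-((M+1:ℕ) : ℤ)) = (q^(M+1))⁻¹ := by
      rw [← zpow_natCast q (M+1), ← zpow_neg]
    rw [hY]
    have hqM : (0:ℝ) < q^(M+1) := by positivity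
    field_simp
    ring

include hq0 hq1 ha0 ha1 in
lemma rel_STAR {c : ℝ} (M : ℕ) :
    Polynomial.C (c*q^(M+1)*(1 - a*q^(M+1))) * littleQJacobi q a c (M+1)
    = Polynomial.C (-(1 - c*q^(M+1))) * littleQJacobi q a c M
      + Polynomial.C (1 - a*c*q^(2*M+2)) *
        ((1 - Polynomial.C (c*q) * Polynomial.X) * littleQJacobi q a (q*c) M) := by
  have hqne : q ≠ 0 := ne_of_gt hq0
  apply Polynomial.ext
  intro k
  have hsplit : ∀ p : Polynomial ℝ,
      (1 - Polynomial.C (c*q) * Polynomial.X) * p = p - Polynomial.C (c*q) * (Polynomial.X * p) := by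
    intro p; ring
  simp only [Polynomial.coeff_add, Polynomial.coeff_C_mul, hsplit, Polynomial.coeff_sub]
  rcases Nat.eq_zero_or_pos k with rfl | hk
  · rw [Polynomial.mul_coeff_zero]
    simp only [Polynomial.coeff_X_zero, zero_mul, mul_zero, sub_zero,
      coeff_littleQJacobi q a _ hqne]
    simp only [pow_zero, mul_one, d, qPoch_zero]
    norm_num
    ring
  · obtain ⟨j, rfl⟩ : ∃ j, k = j + 1 := ⟨k - 1, by omega⟩
    rw [Polynomial.coeff_X_mul]
    simp only [coeff_littleQJacobi q a _ hqne]
    have hT'pos := qPoch_aq_pos hq0 hq1 ha0 ha1 j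
    have hU'pos := qPoch_q_pos hq0 hq1 j
    have haqj := one_sub_aq_pos hq0 hq1 ha0 ha1 (j+1) (by omega)
    have hqj := qlt1 hq0 hq1 (j+1) (by omega)
    have eT : qPoch q (a*q) (j+1) = qPoch q (a*q) j * (1 - a*q*q^j) := qPoch_succ_back q _ j
    have eU : qPoch q q (j+1) = qPoch q q j * (1 - q*q^j) := qPoch_succ_back q _ j
    have hbase : q ^ (-((M:ℕ) : ℤ)) = q ^ (-((M+1:ℕ) : ℤ)) * q := by
      have h := zpow_add₀ hqne (-((M+1:ℕ) : ℤ)) 1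
      rw [zpow_one] at h
      rw [show -((M:ℕ) : ℤ) = -((M+1:ℕ) : ℤ) + 1 by push_cast; ring, h]
    have e1 : qPoch q (q ^ (-((M+1:ℕ) : ℤ))) (j+1)
        = (1 - q ^ (-((M+1:ℕ) : ℤ))) * qPoch q (q ^ (-((M+1:ℕ) : ℤ)) * q) j :=
      qPoch_succ_front q _ j
    have e2 : qPoch q (q ^ (-((M:ℕ) : ℤ))) (j+1)
        = qPoch q (q ^ (-((M+1:ℕ) : ℤ)) * q) j * (1 - q ^ (-((M+1:ℕ) : ℤ)) * q * q ^ j) := by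
      rw [hbase, qPoch_succ_back]
    have e2' : qPoch q (q ^ (-((M:ℕ) : ℤ))) j = qPoch q (q ^ (-((M+1:ℕ) : ℤ)) * q) j := by
      rw [hbase]
    set P := qPoch q (q ^ (-((M+1:ℕ) : ℤ)) * q) j with hP
    -- second pochhammers, common core S = (acq^{M+2};q)_j
    have e3 : qPoch q (a*c*q^(M+1+1)) (j+1)
        = qPoch q (a*c*q^(M+2)) j * (1 - a*c*q^(M+2)*q^j) := qPoch_succ_back q _ j
    have e4 : qPoch q (a*c*q^(M+1)) (j+1)
        = (1 - a*c*q^(M+1)) * qPoch q (a*c*q^(M+2)) j := by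
      have := qPoch_succ_front q (a*c*q^(M+1)) j
      rw [show a*c*q^(M+1)*q = a*c*q^(M+2) by ring] at this
      exact this
    have e5 : qPoch q (a*(q*c)*q^(M+1)) (j+1)
        = qPoch q (a*c*q^(M+2)) j * (1 - a*c*q^(M+2)*q^j) := by
      rw [show a*(q*c)*q^(M+1) = a*c*q^(M+2) by ring, qPoch_succ_back]
    have e5' : qPoch q (a*(q*c)*q^(M+1)) j = qPoch q (a*c*q^(M+2)) j := by
      rw [show a*(q*c)*q^(M+1) = a*c*q^(M+2) by ring]
    set S := qPoch q (a*c*q^(M+2)) j with hS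
    rw [d, d, d, d, e1, e2, e2', e3, e4, e5, e5', eT, eU]
    have hY : q ^ (-((M+1:ℕ) : ℤ)) = (q^(M+1))⁻¹ := by
      rw [← zpow_natCast q (M+1), ← zpow_neg]
    rw [hY]
    have hqM : (0:ℝ) < q^(M+1) := by positivity
    have h1 : (1 : ℝ) - a*q*q^j ≠ 0 := by
      have : a*q*q^j = a*q^(j+1) := by ring
      rw [this]; linarith
    have h2 : (1 : ℝ) - q*q^j ≠ 0 := by
      have : q*q^j = q^(j+1) := by ring
      rw [this]; linarith
    have hTne := ne_of_gt hT'pos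
    have hUne := ne_of_gt hU'pos
    generalize hA : 1 - a*q*q^j = A at *
    generalize hB : 1 - q*q^j = B at *
    field_simp
    subst hA hB
    ring

include hq0 hq1 ha0 ha1 in
lemma rel_R2 {b : ℝ} (hb : b < 0) (M : ℕ) :
    Polynomial.C ((1 - a*b*q^(2*M+4)) * (1 - b*q^(M+2))) * littleQJacobi q a b (M+1)
    = Polynomial.C ((1 - a*b*q^(M+3)) * (1 - b*q^(M+2)*(1+a) + a*b*q^(2*M+3)))
        * littleQJacobi q a (q^2*b) (M+1)
      + (Polynomial.C (a*b*q^(M+2)*(1-q^(M+1))*((1+q) - b*q^(M+3)*(1+a)))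
         - Polynomial.C (a*b^2*q^(M+4)*(1-q^(M+1))*(1-a*b*q^(2*M+4))) * Polynomial.X)
        * littleQJacobi q a (q^2*b) M := by
  have hqne : q ≠ 0 := ne_of_gt hq0
  have hApos := a_pos hq0 ha0
  apply Polynomial.ext
  intro k
  have hsplit : ∀ (e1 e2 : ℝ) (p : Polynomial ℝ),
      (Polynomial.C e1 - Polynomial.C e2 * Polynomial.X) * p
      = Polynomial.C e1 * p - Polynomial.C e2 * (Polynomial.X * p) := by
    intro e1 e2 p; ring
  simp only [Polynomial.coeff_add, Polynomial.coeff_C_mul, hsplit, Polynomial.coeff_sub]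
  rcases Nat.eq_zero_or_pos k with rfl | hk
  · rw [Polynomial.mul_coeff_zero]
    simp only [Polynomial.coeff_X_zero, zero_mul, mul_zero, sub_zero,
      coeff_littleQJacobi q a _ hqne]
    simp only [pow_zero, mul_one, d, qPoch_zero]
    norm_num
    ring
  · obtain ⟨j, rfl⟩ : ∃ j, k = j + 1 := ⟨k - 1, by omega⟩
    rw [Polynomial.coeff_X_mul]
    simp only [coeff_littleQJacobi q a _ hqne]
    have hT'pos := qPoch_aq_pos hq0 hq1 ha0 ha1 j
    have hU'pos := qPoch_q_pos hq0 hq1 j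
    have haqj := one_sub_aq_pos hq0 hq1 ha0 ha1 (j+1) (by omega)
    have hqj := qlt1 hq0 hq1 (j+1) (by omega)
    have eT : qPoch q (a*q) (j+1) = qPoch q (a*q) j * (1 - a*q*q^j) := qPoch_succ_back q _ j
    have eU : qPoch q q (j+1) = qPoch q q j * (1 - q*q^j) := qPoch_succ_back q _ j
    have hbase : q ^ (-((M:ℕ) : ℤ)) = q ^ (-((M+1:ℕ) : ℤ)) * q := by
      have h := zpow_add₀ hqne (-((M+1:ℕ) : ℤ)) 1
      rw [zpow_one] at h
      rw [show -((M:ℕ) : ℤ) = -((M+1:ℕ) : ℤ) + 1 by push_cast; ring, h]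
    have e1 : qPoch q (q ^ (-((M+1:ℕ) : ℤ))) (j+1)
        = (1 - q ^ (-((M+1:ℕ) : ℤ))) * qPoch q (q ^ (-((M+1:ℕ) : ℤ)) * q) j :=
      qPoch_succ_front q _ j
    have e2 : qPoch q (q ^ (-((M:ℕ) : ℤ))) (j+1)
        = qPoch q (q ^ (-((M+1:ℕ) : ℤ)) * q) j * (1 - q ^ (-((M+1:ℕ) : ℤ)) * q * q ^ j) := by
      rw [hbase, qPoch_succ_back]
    have e2' : qPoch q (q ^ (-((M:ℕ) : ℤ))) j = qPoch q (q ^ (-((M+1:ℕ) : ℤ)) * q) j := by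
      rw [hbase]
    set P := qPoch q (q ^ (-((M+1:ℕ) : ℤ)) * q) j with hP
    -- second pochhammers, common core S = (abq^{M+3};q)_j
    have e3 : qPoch q (a*b*q^(M+1+1)) (j+1)
        = (1 - a*b*q^(M+2)) * qPoch q (a*b*q^(M+3)) j := by
      have := qPoch_succ_front q (a*b*q^(M+2)) j
      rw [show a*b*q^(M+2)*q = a*b*q^(M+3) by ring] at this
      exact this
    have e4 : qPoch q (a*(q^2*b)*q^(M+1)) (j+1)
        = qPoch q (a*b*q^(M+3)) j * (1 - a*b*q^(M+3)*q^j) := by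
      rw [show a*(q^2*b)*q^(M+1) = a*b*q^(M+3) by ring, qPoch_succ_back]
    have e4' : qPoch q (a*(q^2*b)*q^(M+1)) j = qPoch q (a*b*q^(M+3)) j := by
      rw [show a*(q^2*b)*q^(M+1) = a*b*q^(M+3) by ring]
    set S := qPoch q (a*b*q^(M+3)) j with hS
    -- the shifted core W = (abq^{M+4};q)_{j+1}
    have hXne : (1:ℝ) - a*b*q^(M+3) ≠ 0 := by
      have : a*b*q^(M+3) < 0 := by
        apply mul_neg_of_neg_of_pos (mul_neg_of_pos_of_neg hApos hb)
        positivity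
      linarith
    have e5 : qPoch q (a*(q^2*b)*q^(M+1+1)) (j+1)
        = qPoch q (a*b*q^(M+3)*q) (j+1) := by
      rw [show a*(q^2*b)*q^(M+1+1) = a*b*q^(M+3)*q by ring]
    have hW : qPoch q (a*b*q^(M+3)*q) (j+1)
        = S * (1 - a*b*q^(M+3)*q^j) * (1 - a*b*q^(M+3)*q^(j+1)) / (1 - a*b*q^(M+3)) := by
      rw [eq_div_iff hXne]
      have h1 : (1 - a*b*q^(M+3)) * qPoch q (a*b*q^(M+3)*q) (j+1)
          = qPoch q (a*b*q^(M+3)) (j+2) := (qPoch_succ_front q _ (j+1)).symm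
      rw [mul_comm (qPoch q (a*b*q^(M+3)*q) (j+1)) (1 - a*b*q^(M+3)), h1,
        qPoch_succ_back q _ (j+1), qPoch_succ_back q _ j]
    rw [d, d, d, d, e1, e2, e2', e3, e4, e4', e5, hW, eT, eU]
    have hY : q ^ (-((M+1:ℕ) : ℤ)) = (q^(M+1))⁻¹ := by
      rw [← zpow_natCast q (M+1), ← zpow_neg]
    rw [hY]
    have hqM : (0:ℝ) < q^(M+1) := by positivity
    have h1 : (1 : ℝ) - a*q*q^j ≠ 0 := by
      have e : a*q*q^j = a*q^(j+1) := by ring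
      rw [e]; linarith
    have h2 : (1 : ℝ) - q*q^j ≠ 0 := by
      have e : q*q^j = q^(j+1) := by ring
      rw [e]; linarith
    field_simp
    ring

lemma eval_root {p : Polynomial ℝ} (hp : p ≠ 0) {m : ℕ} {x : Fin m → ℝ}
    (h : p.roots = ↑(List.ofFn x)) (i : Fin m) : Polynomial.eval (x i) p = 0 := by
  have hmem : x i ∈ p.roots := by
    rw [h]
    simp [List.mem_ofFn]
  exact (Polynomial.mem_roots hp).1 hmem

lemma exists_big (f : Polynomial ℝ) (n : ℕ) (hn : 0 < n) (hdeg : f.natDegree = n)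
    (hlead : 0 < (-1) ^ n * f.leadingCoeff) (B : ℝ) :
    ∃ t, B < t ∧ 0 < (-1) ^ n * Polynomial.eval t f := by
  have hC : ((-1 : ℝ) ^ n) ≠ 0 := by
    apply pow_ne_zero; norm_num
  have hfne : f ≠ 0 := by
    intro h
    rw [h] at hlead
    simp at hlead
  set g := Polynomial.C ((-1 : ℝ) ^ n) * f with hg
  have hgne : g ≠ 0 := mul_ne_zero (by simp [hC]) hfne
  have hgdeg : g.natDegree = n := by
    rw [hg, Polynomial.natDegree_C_mul hC, hdeg]
  have hglead : 0 < g.leadingCoeff := by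
    rw [hg, Polynomial.leadingCoeff_mul, Polynomial.leadingCoeff_C]
    exact hlead
  have hgd : 0 < g.degree := by
    rw [← Polynomial.natDegree_pos_iff_degree_pos, hgdeg]
    exact hn
  have htend := Polynomial.tendsto_atTop_of_leadingCoeff_nonneg g hgd hglead.le
  have h1 := htend.eventually_gt_atTop 0
  have h2 := Filter.eventually_gt_atTop B
  obtain ⟨t, ht1, ht2⟩ := (h1.and h2).exists
  refine ⟨t, ht2, ?_⟩
  have : Polynomial.eval t g = (-1) ^ n * Polynomial.eval t f := by
    rw [hg, Polynomial.eval_mul, Polynomial.eval_C]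
  rw [← this]
  exact ht1

/-- interlacing data for `p_{m+1}` and `p_m` at parameter `c` -/
def Itl (q a : ℝ) (m : ℕ) (c : ℝ) : Prop :=
  ∃ (x : Fin (m+1) → ℝ) (u : Fin m → ℝ),
    (StrictMono x ∧ (∀ i, 0 < x i) ∧ (littleQJacobi q a c (m+1)).roots = ↑(List.ofFn x)) ∧
    (StrictMono u ∧ (∀ i, 0 < u i) ∧ (littleQJacobi q a c m).roots = ↑(List.ofFn u)) ∧
    (∀ (i : ℕ) (h : i < m), x ⟨i, by omega⟩ < u ⟨i, h⟩ ∧ u ⟨i, h⟩ < x ⟨i+1, by omega⟩)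

include hq0 hq1 ha0 ha1 in
/-- sign of a little q-Jacobi polynomial at a point located among its roots -/
lemma sign_eval_lqj {b : ℝ} (hb : b < 0) (m : ℕ) (x : Fin m → ℝ)
    (hroots : (littleQJacobi q a b m).roots = ↑(List.ofFn x))
    (t : ℝ) (j : ℕ) (hjm : j ≤ m)
    (hbelow : ∀ i : Fin m, (i : ℕ) < j → x i < t)
    (habove : ∀ i : Fin m, j ≤ (i : ℕ) → t < x i) :
    0 < (-1) ^ j * Polynomial.eval t (littleQJacobi q a b m) :=
  sign_eval_of_roots _ m x (natDegree_lqj hq0 hq1 ha0 ha1 hb m) hroots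
    (leadingCoeff_sign hq0 hq1 ha0 ha1 hb m) t j hjm hbelow habove

lemma pos_factor {x y : ℝ} (h : 0 < x * y) (hy : 0 < y) : 0 < x := by
  by_contra hx
  push_neg at hx
  exact absurd h (not_lt.2 (mul_nonpos_of_nonpos_of_nonneg hx hy.le))

lemma sign_flip_combine {A0 F B E : ℝ} {i : ℕ} (hev : A0 * F = B * E)
    (hsgn : 0 < (-1:ℝ)^i * E) (hA0 : 0 < A0) (hB : B < 0) : 0 < (-1:ℝ)^(i+1) * F := by
  have h6 : ((-1:ℝ)^(i+1) * F) * A0 = (-B) * ((-1:ℝ)^i * E) := by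
    rw [pow_succ]
    calc ((-1:ℝ)^i * -1 * F) * A0 = (-1:ℝ)^i * -1 * (A0 * F) := by ring
    _ = (-1:ℝ)^i * -1 * (B * E) := by rw [hev]
    _ = (-B) * ((-1:ℝ)^i * E) := by ring
  exact pos_factor (by rw [h6]; exact mul_pos (by linarith) hsgn) hA0

lemma sign_keep_combine {A0 F B E : ℝ} {i : ℕ} (hev : A0 * F = B * E)
    (hsgn : 0 < (-1:ℝ)^i * E) (hA0 : 0 < A0) (hB : 0 < B) : 0 < (-1:ℝ)^i * F := by
  have h6 : ((-1:ℝ)^i * F) * A0 = B * ((-1:ℝ)^i * E) := by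
    calc ((-1:ℝ)^i * F) * A0 = (-1:ℝ)^i * (A0 * F) := by ring
    _ = (-1:ℝ)^i * (B * E) := by rw [hev]
    _ = B * ((-1:ℝ)^i * E) := by ring
  exact pos_factor (by rw [h6]; exact mul_pos hB hsgn) hA0

include hq0 ha0 in
lemma fac_pos_ac {c : ℝ} (hc : c < 0) (k : ℕ) : 0 < 1 - a*c*q^k := by
  have h1 : a*c < 0 := mul_neg_of_pos_of_neg (a_pos hq0 ha0) hc
  have h2 : (0:ℝ) < q^k := by positivity
  nlinarith

include hq0 in
lemma fac_pos_c {c : ℝ} (hc : c < 0) (k : ℕ) : 0 < 1 - c*q^k := by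
  have h2 : (0:ℝ) < q^k := by positivity
  nlinarith

include hq0 hq1 ha0 in
lemma fac_neg_ac {c : ℝ} (hc : c < 0) (k j : ℕ) (hj : 1 ≤ j) :
    a*c*q^k*(1-q^j) < 0 := by
  have h1 : a*c < 0 := mul_neg_of_pos_of_neg (a_pos hq0 ha0) hc
  have h2 : (0:ℝ) < q^k := by positivity
  have h3 := qlt1 hq0 hq1 j hj
  have h5 : a*c*q^k < 0 := mul_neg_of_neg_of_pos h1 h2
  exact mul_neg_of_neg_of_pos h5 (by linarith)

include hq0 hq1 ha0 ha1 in
lemma L1_arg {c : ℝ} (hc : c < 0) (m : ℕ)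
    (z : Fin (m+1) → ℝ) (v : Fin m → ℝ)
    (hzm : StrictMono z) (hzp : ∀ i, 0 < z i)
    (hzr : (littleQJacobi q a (q*c) (m+1)).roots = ↑(List.ofFn z))
    (hvm : StrictMono v) (hvp : ∀ i, 0 < v i)
    (hvr : (littleQJacobi q a (q*c) m).roots = ↑(List.ofFn v))
    (hzv : ∀ (i : ℕ) (h : i < m), z ⟨i, by omega⟩ < v ⟨i, h⟩ ∧ v ⟨i, h⟩ < z ⟨i+1, by omega⟩) :
    ∃ u : Fin (m+1) → ℝ, StrictMono u ∧ (∀ i, 0 < u i) ∧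
      (littleQJacobi q a c (m+1)).roots = ↑(List.ofFn u) ∧
      (∀ i, u i < z i) ∧
      (∀ (i : ℕ) (h : i + 1 < m + 1), v ⟨i, by omega⟩ < u ⟨i+1, h⟩) := by
  have hqc : q * c < 0 := mul_neg_of_pos_of_neg hq0 hc
  set f := littleQJacobi q a c (m+1) with hf
  have hrel := rel_L1 hq0 hq1 ha0 ha1 hc m
  have hA0 : 0 < 1 - a*c*q^(2*m+3) := fac_pos_ac hq0 ha0 hc _
  have hA1 : 0 < 1 - a*c*q^(m+2) := fac_pos_ac hq0 ha0 hc _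
  have hBneg : a*c*q^(m+2)*(1-q^(m+1)) < 0 := fac_neg_ac hq0 hq1 ha0 hc _ _ (by omega)
  -- sign of f at z i : (-1)^(i+1)
  have hsz : ∀ i : Fin (m+1), 0 < (-1:ℝ)^((i:ℕ)+1) * Polynomial.eval (z i) f := by
    intro i
    have hev := congrArg (Polynomial.eval (z i)) hrel
    simp only [Polynomial.eval_add, Polynomial.eval_mul, Polynomial.eval_C] at hev
    have hz0 : Polynomial.eval (z i) (littleQJacobi q a (q*c) (m+1)) = 0 :=
      eval_root (lqj_ne_zero hq0 hq1 ha0 ha1 hqc (m+1)) hzr i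
    rw [hz0, mul_zero, zero_add] at hev
    have hsgn : 0 < (-1:ℝ)^((i:ℕ)) * Polynomial.eval (z i) (littleQJacobi q a (q*c) m) := by
      apply sign_eval_lqj hq0 hq1 ha0 ha1 hqc m v hvr (z i) (i:ℕ) (by omega)
      · intro jj hjj
        have h1 := (hzv jj jj.isLt).2
        have h2 : z ⟨(jj:ℕ)+1, by omega⟩ ≤ z i := hzm.monotone (by rw [Fin.le_def]; simpa using hjj)
        linarith
      · intro jj hjj
        have h1 := (hzv jj jj.isLt).1
        have h2 : z i ≤ z ⟨(jj:ℕ), by omega⟩ := hzm.monotone (by rw [Fin.le_def]; simpa using hjj)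
        linarith
    exact sign_flip_combine hev hsgn hA0 hBneg
  -- sign of f at v i : (-1)^(i+1)
  have hsv : ∀ i : Fin m, 0 < (-1:ℝ)^((i:ℕ)+1) * Polynomial.eval (v i) f := by
    intro i
    have hev := congrArg (Polynomial.eval (v i)) hrel
    simp only [Polynomial.eval_add, Polynomial.eval_mul, Polynomial.eval_C] at hev
    have hv0 : Polynomial.eval (v i) (littleQJacobi q a (q*c) m) = 0 :=
      eval_root (lqj_ne_zero hq0 hq1 ha0 ha1 hqc m) hvr i
    rw [hv0, mul_zero, add_zero] at hev
    have hsgn : 0 < (-1:ℝ)^((i:ℕ)+1) * Polynomial.eval (v i) (littleQJacobi q a (q*c) (m+1)) := by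
      apply sign_eval_lqj hq0 hq1 ha0 ha1 hqc (m+1) z hzr (v i) ((i:ℕ)+1) (by omega)
      · intro jj hjj
        have h1 := (hzv i i.isLt).1
        have h2 : z jj ≤ z ⟨(i:ℕ), by omega⟩ := hzm.monotone (by rw [Fin.le_def]; simpa using by omega)
        linarith
      · intro jj hjj
        have h1 := (hzv i i.isLt).2
        have h2 : z ⟨(i:ℕ)+1, by omega⟩ ≤ z jj := hzm.monotone (by rw [Fin.le_def]; simpa using hjj)
        linarith
    exact sign_keep_combine hev hsgn hA0 hA1
  -- apply the workhorse
  set l : Fin (m+1) → ℝ := z with hl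
  set r : Fin (m+1) → ℝ := fun i => if h : (i:ℕ) < m then v ⟨(i:ℕ), h⟩ else z i with hr
  obtain ⟨u, hum, hur, hup, hul, hugap⟩ :=
    workhorse f (m+1) (by omega) (natDegree_lqj hq0 hq1 ha0 ha1 hc (m+1))
      (by rw [hf, eval_zero_lqj (q := q) (a := a) c (ne_of_gt hq0)]; norm_num)
      l r (hzp _)
      (by
        intro i
        by_cases h : (i:ℕ) < m
        · simp only [hr, dif_pos h]
          exact le_of_lt (hzv (i:ℕ) h).1
        · simp only [hr, dif_neg h]
          exact le_refl _)
      (by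
        intro i hi
        have him : i < m := by omega
        simp only [hr, dif_pos him]
        exact (hzv i him).2)
      (fun i => hsz i)
      (by
        intro i
        by_cases h : (i:ℕ) < m
        · simp only [hr, dif_pos h]
          exact hsv ⟨(i:ℕ), h⟩
        · simp only [hr, dif_neg h]
          exact hsz i)
  refine ⟨u, hum, hup, hur, hul, ?_⟩
  intro i hi
  have hgap := hugap i hi
  have him : i < m := by omega
  have heq : r ⟨i, by omega⟩ = v ⟨i, him⟩ := by
    simp only [hr]
    exact dif_pos him
  rw [heq] at hgap
  exact hgap

include hq0 hq1 ha0 ha1 in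
lemma STAR_arg {c : ℝ} (hc : c < 0) (m : ℕ)
    (u z : Fin (m+1) → ℝ)
    (hum : StrictMono u) (hup : ∀ i, 0 < u i)
    (hur : (littleQJacobi q a c (m+1)).roots = ↑(List.ofFn u))
    (hzm : StrictMono z) (hzp : ∀ i, 0 < z i)
    (hzr : (littleQJacobi q a (q*c) (m+1)).roots = ↑(List.ofFn z))
    (hin1 : ∀ i, u i < z i)
    (hin2 : ∀ (i : ℕ) (h : i + 1 < m + 1), z ⟨i, by omega⟩ < u ⟨i+1, h⟩) :
    ∃ x : Fin (m+2) → ℝ, StrictMono x ∧ (∀ i, 0 < x i) ∧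
      (littleQJacobi q a c (m+2)).roots = ↑(List.ofFn x) ∧
      (∀ (i : ℕ) (h : i < m+1), x ⟨i, by omega⟩ < u ⟨i, h⟩ ∧ u ⟨i, h⟩ < x ⟨i+1, by omega⟩) := by
  have hqc : q * c < 0 := mul_neg_of_pos_of_neg hq0 hc
  set f := littleQJacobi q a c (m+2) with hf
  have hrel := rel_STAR hq0 hq1 ha0 ha1 (c := c) (m+1)
  have hA0 : c*q^(m+2)*(1-a*q^(m+2)) < 0 := by
    have h1 : (0:ℝ) < q^(m+2) := by positivity
    have h2 := one_sub_aq_pos hq0 hq1 ha0 ha1 (m+2) (by omega)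
    have h3 : c * q^(m+2) < 0 := mul_neg_of_neg_of_pos hc h1
    exact mul_neg_of_neg_of_pos h3 h2
  have hC1 : 0 < 1 - c*q^(m+2) := fac_pos_c hq0 hc _
  have hC2 : 0 < 1 - a*c*q^(2*(m+1)+2) := fac_pos_ac hq0 ha0 hc _
  -- sign of f at u i : (-1)^(i+1)
  have hsu : ∀ i : Fin (m+1), 0 < (-1:ℝ)^((i:ℕ)+1) * Polynomial.eval (u i) f := by
    intro i
    have hev := congrArg (Polynomial.eval (u i)) hrel
    simp only [Polynomial.eval_add, Polynomial.eval_mul, Polynomial.eval_sub,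
      Polynomial.eval_one, Polynomial.eval_X, Polynomial.eval_C] at hev
    have hu0 : Polynomial.eval (u i) (littleQJacobi q a c (m+1)) = 0 :=
      eval_root (lqj_ne_zero hq0 hq1 ha0 ha1 hc (m+1)) hur i
    rw [hu0, mul_zero, zero_add] at hev
    have hev' : (-(c*q^(m+2)*(1-a*q^(m+2)))) * Polynomial.eval (u i) f
        = (-((1 - a*c*q^(2*(m+1)+2)) * (1 - c*q*u i)))
          * Polynomial.eval (u i) (littleQJacobi q a (q*c) (m+1)) := by
      rw [show (m+1+1) = m+2 from rfl] at hev
      linarith [hev]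
    have hsgn : 0 < (-1:ℝ)^((i:ℕ)) * Polynomial.eval (u i) (littleQJacobi q a (q*c) (m+1)) := by
      apply sign_eval_lqj hq0 hq1 ha0 ha1 hqc (m+1) z hzr (u i) (i:ℕ) (by omega)
      · intro jj hjj
        have h1 := hin2 (jj:ℕ) (by omega)
        have h2 : u ⟨(jj:ℕ)+1, by omega⟩ ≤ u i := hum.monotone (by rw [Fin.le_def]; simpa using hjj)
        linarith
      · intro jj hjj
        have h1 := hin1 i
        have h2 : z i ≤ z jj := hzm.monotone (by rw [Fin.le_def]; simpa using hjj)
        linarith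
    have hBneg : -((1 - a*c*q^(2*(m+1)+2)) * (1 - c*q*u i)) < 0 := by
      have h5 : c*q*u i < 0 := mul_neg_of_neg_of_pos (mul_neg_of_neg_of_pos hc hq0) (hup i)
      have h6 : 0 < 1 - c*q*u i := by linarith
      nlinarith [hC2]
    exact sign_flip_combine hev' hsgn (by linarith) hBneg
  -- sign of f at z i : (-1)^(i+1)
  have hsz : ∀ i : Fin (m+1), 0 < (-1:ℝ)^((i:ℕ)+1) * Polynomial.eval (z i) f := by
    intro i
    have hev := congrArg (Polynomial.eval (z i)) hrel
    simp only [Polynomial.eval_add, Polynomial.eval_mul, Polynomial.eval_sub,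
      Polynomial.eval_one, Polynomial.eval_X, Polynomial.eval_C] at hev
    have hz0 : Polynomial.eval (z i) (littleQJacobi q a (q*c) (m+1)) = 0 :=
      eval_root (lqj_ne_zero hq0 hq1 ha0 ha1 hqc (m+1)) hzr i
    rw [hz0, mul_zero, mul_zero, add_zero] at hev
    have hev' : (-(c*q^(m+2)*(1-a*q^(m+2)))) * Polynomial.eval (z i) f
        = (1 - c*q^(m+2)) * Polynomial.eval (z i) (littleQJacobi q a c (m+1)) := by
      rw [show (m+1+1) = m+2 from rfl] at hev
      linarith [hev]
    have hsgn : 0 < (-1:ℝ)^((i:ℕ)+1) * Polynomial.eval (z i) (littleQJacobi q a c (m+1)) := by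
      apply sign_eval_lqj hq0 hq1 ha0 ha1 hc (m+1) u hur (z i) ((i:ℕ)+1) (by omega)
      · intro jj hjj
        have h1 := hin1 i
        have h2 : u jj ≤ u ⟨(i:ℕ), by omega⟩ := hum.monotone (by rw [Fin.le_def]; simpa using by omega)
        linarith
      · intro jj hjj
        have h1 := hin2 (i:ℕ) (by omega)
        have h2 : u ⟨(i:ℕ)+1, by omega⟩ ≤ u jj := hum.monotone (by rw [Fin.le_def]; simpa using hjj)
        linarith
    exact sign_keep_combine hev' hsgn (by linarith) hC1
  -- a big point
  obtain ⟨t, htgt, htsgn⟩ := exists_big f (m+2) (by omega)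
    (natDegree_lqj hq0 hq1 ha0 ha1 hc (m+2)) (leadingCoeff_sign hq0 hq1 ha0 ha1 hc (m+2))
    (z ⟨m, by omega⟩)
  set l : Fin (m+2) → ℝ := fun i => if h : (i:ℕ) < m+1 then u ⟨(i:ℕ), h⟩ else t with hl
  set r : Fin (m+2) → ℝ := fun i => if h : (i:ℕ) < m+1 then z ⟨(i:ℕ), h⟩ else t with hr
  have hl0 : l ⟨0, by omega⟩ = u ⟨0, by omega⟩ := dif_pos (Nat.succ_pos m)
  obtain ⟨x, hxm, hxr, hxp, hxl, hxgap⟩ :=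
    workhorse f (m+2) (by omega) (natDegree_lqj hq0 hq1 ha0 ha1 hc (m+2))
      (by rw [hf, eval_zero_lqj (q := q) (a := a) c (ne_of_gt hq0)]; norm_num)
      l r (by rw [hl0]; exact hup _)
      (by
        intro i
        by_cases h : (i:ℕ) < m+1
        · have e1 : l i = u ⟨(i:ℕ), h⟩ := dif_pos h
          have e2 : r i = z ⟨(i:ℕ), h⟩ := dif_pos h
          rw [e1, e2]
          exact le_of_lt (hin1 _)
        · have e1 : l i = t := dif_neg h
          have e2 : r i = t := dif_neg h
          rw [e1, e2])
      (by
        intro i hi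
        by_cases h : i+1 < m+1
        · have e1 : r ⟨i, by omega⟩ = z ⟨i, by omega⟩ := dif_pos (show i < m+1 by omega)
          have e2 : l ⟨i+1, hi⟩ = u ⟨i+1, by omega⟩ := dif_pos h
          rw [e1, e2]
          exact hin2 i h
        · have hieq : i = m := by omega
          have e1 : r ⟨i, by omega⟩ = z ⟨i, by omega⟩ := dif_pos (show i < m+1 by omega)
          have e2 : l ⟨i+1, hi⟩ = t := dif_neg h
          rw [e1, e2]
          have : z ⟨i, by omega⟩ ≤ z ⟨m, by omega⟩ :=
            hzm.monotone (by rw [Fin.le_def]; exact (by omega : i ≤ m))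
          linarith)
      (by
        intro i
        by_cases h : (i:ℕ) < m+1
        · have e1 : l i = u ⟨(i:ℕ), h⟩ := dif_pos h
          rw [e1]
          exact hsu ⟨(i:ℕ), h⟩
        · have e1 : l i = t := dif_neg h
          have hieq : (i:ℕ) = m+1 := by omega
          rw [e1, hieq]
          exact htsgn)
      (by
        intro i
        by_cases h : (i:ℕ) < m+1
        · have e2 : r i = z ⟨(i:ℕ), h⟩ := dif_pos h
          rw [e2]
          exact hsz ⟨(i:ℕ), h⟩
        · have e2 : r i = t := dif_neg h
          have hieq : (i:ℕ) = m+1 := by omega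
          rw [e2, hieq]
          exact htsgn)
  refine ⟨x, hxm, hxp, hxr, ?_⟩
  intro i hi
  constructor
  · have h1 := hxl ⟨i, by omega⟩
    have e1 : l ⟨i, by omega⟩ = u ⟨i, hi⟩ := dif_pos (by simpa using hi)
    rw [e1] at h1
    exact h1
  · have h1 := hxgap i (by omega)
    have e1 : r ⟨i, by omega⟩ = z ⟨i, by omega⟩ := dif_pos (by simpa using hi)
    rw [e1] at h1
    have h2 := hin1 ⟨i, hi⟩
    have h3 : u ⟨i, hi⟩ < z ⟨i, by omega⟩ := h2
    linarith

include hq0 hq1 ha0 ha1 in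
lemma main_ind (m : ℕ) : ∀ c : ℝ, c < 0 → Itl q a m c := by
  induction m with
  | zero =>
    intro c hc
    set f := littleQJacobi q a c 1 with hf
    obtain ⟨t, htgt, htsgn⟩ := exists_big f 1 (by omega)
      (natDegree_lqj hq0 hq1 ha0 ha1 hc 1) (leadingCoeff_sign hq0 hq1 ha0 ha1 hc 1) 0
    obtain ⟨x, hxm, hxr, hxp, hxl, hxgap⟩ :=
      workhorse f 1 (by omega) (natDegree_lqj hq0 hq1 ha0 ha1 hc 1)
        (by rw [hf, eval_zero_lqj (q := q) (a := a) c (ne_of_gt hq0)]; norm_num)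
        (fun _ => t) (fun _ => t) htgt (fun _ => le_refl _)
        (by intro i hi; omega)
        (by
          intro i
          have : (i:ℕ) = 0 := by omega
          rw [this]
          simpa using htsgn)
        (by
          intro i
          have : (i:ℕ) = 0 := by omega
          rw [this]
          simpa using htsgn)
    refine ⟨x, fun i => i.elim0, ⟨hxm, hxp, hxr⟩, ⟨fun i => i.elim0, fun i => i.elim0, ?_⟩,
      fun i h => absurd h (by omega)⟩
    have h01 : littleQJacobi q a c 0 = 1 := by
      rw [littleQJacobi]
      simp [qPoch_zero]
    rw [h01]
    simp [Polynomial.roots_one]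
  | succ m ih =>
    intro c hc
    have hqc : q * c < 0 := mul_neg_of_pos_of_neg hq0 hc
    obtain ⟨z, v, ⟨hzm, hzp, hzr⟩, ⟨hvm, hvp, hvr⟩, hzv⟩ := ih (q*c) hqc
    obtain ⟨u, hum, hup, hur, hul, hugap⟩ :=
      L1_arg hq0 hq1 ha0 ha1 hc m z v hzm hzp hzr hvm hvp hvr hzv
    have hin2 : ∀ (i : ℕ) (h : i + 1 < m + 1), z ⟨i, by omega⟩ < u ⟨i+1, h⟩ := by
      intro i h
      have h1 := (hzv i (by omega)).1
      have h2 := hugap i h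
      linarith
    obtain ⟨x, hxm, hxp, hxr, hxint⟩ :=
      STAR_arg hq0 hq1 ha0 ha1 hc m u z hum hup hur hzm hzp hzr hul hin2
    exact ⟨x, u, ⟨hxm, hxp, hxr⟩, ⟨hum, hup, hur⟩, hxint⟩

end Main
end LQJ


/-- for `0 < aq < 1`, `b < 0`, `p_n(x; a, b) ≺ p_n(x; a, q²b)`. -/
theorem littleQJacobi_interlacing_b_q2b (q a b : ℝ) (n : ℕ) (hn : 1 ≤ n)
    (hq0 : 0 < q) (hq1 : q < 1) (ha0 : 0 < a * q) (ha1 : a * q < 1) (hb : b < 0) :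
    ∃ (μ ν : Fin n → ℝ),
      StrictMono μ ∧ StrictMono ν ∧
      (∀ i, 0 < μ i) ∧ (∀ i, 0 < ν i) ∧
      (littleQJacobi q a b n).natDegree = n ∧
      (littleQJacobi q a (q ^ 2 * b) n).natDegree = n ∧
      (littleQJacobi q a b n).roots = ↑(List.ofFn μ) ∧
      (littleQJacobi q a (q ^ 2 * b) n).roots = ↑(List.ofFn ν) ∧
      (∀ i : Fin n, μ i < ν i) ∧
      (∀ (i : ℕ) (h : i + 1 < n), ν ⟨i, by omega⟩ < μ ⟨i + 1, h⟩) := by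
  open LQJ in
  obtain ⟨N, rfl⟩ : ∃ N, n = N + 1 := ⟨n - 1, by omega⟩
  have hq2b : q ^ 2 * b < 0 := mul_neg_of_pos_of_neg (by positivity) hb
  have hApos := LQJ.a_pos hq0 ha0
  obtain ⟨w, v, ⟨hwm, hwp, hwr⟩, ⟨hvm, hvp, hvr⟩, hwv⟩ :=
    LQJ.main_ind hq0 hq1 ha0 ha1 N (q ^ 2 * b) hq2b
  set f := littleQJacobi q a b (N + 1) with hf
  have hrel := LQJ.rel_R2 hq0 hq1 ha0 ha1 hb N
  -- constants
  have hab : a * b < 0 := mul_neg_of_pos_of_neg hApos hb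
  have hA0 : 0 < (1 - a*b*q^(2*N+4)) * (1 - b*q^(N+2)) :=
    mul_pos (LQJ.fac_pos_ac hq0 ha0 hb _) (LQJ.fac_pos_c hq0 hb _)
  have hK : 0 < (1 - a*b*q^(N+3)) * (1 - b*q^(N+2)*(1+a) + a*b*q^(2*N+3)) := by
    apply mul_pos (LQJ.fac_pos_ac hq0 ha0 hb _)
    have h1 : 0 < 1 - b*q^(N+2) := LQJ.fac_pos_c hq0 hb _
    have h2 : a*b*q^(N+2)*(1 - q^(N+1)) < 0 := LQJ.fac_neg_ac hq0 hq1 ha0 hb _ _ (by omega)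
    have h3 : 1 - b*q^(N+2)*(1+a) + a*b*q^(2*N+3)
        = (1 - b*q^(N+2)) - a*b*q^(N+2)*(1 - q^(N+1)) := by ring
    rw [h3]
    linarith
  have hG1 : a*b*q^(N+2)*(1-q^(N+1))*((1+q) - b*q^(N+3)*(1+a)) < 0 := by
    have h2 : a*b*q^(N+2)*(1 - q^(N+1)) < 0 := LQJ.fac_neg_ac hq0 hq1 ha0 hb _ _ (by omega)
    have h3 : 0 < (1+q) - b*q^(N+3)*(1+a) := by
      have h4 : b*q^(N+3)*(1+a) < 0 := by
        have : b*q^(N+3) < 0 := mul_neg_of_neg_of_pos hb (by positivity)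
        exact mul_neg_of_neg_of_pos this (by linarith)
      linarith
    exact mul_neg_of_neg_of_pos h2 h3
  have hG2 : 0 < a*b^2*q^(N+4)*(1-q^(N+1))*(1-a*b*q^(2*N+4)) := by
    have hbne : b ≠ 0 := ne_of_lt hb
    have h1 : 0 < a*b^2*q^(N+4) := by positivity
    have h2 : 0 < 1 - q^(N+1) := by
      have := LQJ.qlt1 hq0 hq1 (N+1) (by omega)
      linarith
    have h3 : 0 < 1 - a*b*q^(2*N+4) := LQJ.fac_pos_ac hq0 ha0 hb _
    positivity
  -- signs of f at w i : (-1)^(i+1)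
  have hsw : ∀ i : Fin (N+1), 0 < (-1:ℝ)^((i:ℕ)+1) * Polynomial.eval (w i) f := by
    intro i
    have hev := congrArg (Polynomial.eval (w i)) hrel
    simp only [Polynomial.eval_add, Polynomial.eval_mul, Polynomial.eval_sub,
      Polynomial.eval_X, Polynomial.eval_C] at hev
    have hw0 : Polynomial.eval (w i) (littleQJacobi q a (q^2*b) (N+1)) = 0 :=
      LQJ.eval_root (LQJ.lqj_ne_zero hq0 hq1 ha0 ha1 hq2b (N+1)) hwr i
    rw [hw0, mul_zero, zero_add] at hev
    have hsgn : 0 < (-1:ℝ)^((i:ℕ)) * Polynomial.eval (w i) (littleQJacobi q a (q^2*b) N) := by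
      apply LQJ.sign_eval_lqj hq0 hq1 ha0 ha1 hq2b N v hvr (w i) (i:ℕ) (by omega)
      · intro jj hjj
        have h1 := (hwv jj jj.isLt).2
        have h2 : w ⟨(jj:ℕ)+1, by omega⟩ ≤ w i := hwm.monotone (by rw [Fin.le_def]; simpa using hjj)
        linarith
      · intro jj hjj
        have h1 := (hwv jj jj.isLt).1
        have h2 : w i ≤ w ⟨(jj:ℕ), by omega⟩ := hwm.monotone (by rw [Fin.le_def]; simpa using hjj)
        linarith
    have hBneg : a*b*q^(N+2)*(1-q^(N+1))*((1+q) - b*q^(N+3)*(1+a))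
        - a*b^2*q^(N+4)*(1-q^(N+1))*(1-a*b*q^(2*N+4)) * w i < 0 := by
      have h5 : 0 < a*b^2*q^(N+4)*(1-q^(N+1))*(1-a*b*q^(2*N+4)) * w i := mul_pos hG2 (hwp i)
      linarith
    exact LQJ.sign_flip_combine hev hsgn hA0 hBneg
  -- signs of f at v i : (-1)^(i+1)
  have hsv : ∀ i : Fin N, 0 < (-1:ℝ)^((i:ℕ)+1) * Polynomial.eval (v i) f := by
    intro i
    have hev := congrArg (Polynomial.eval (v i)) hrel
    simp only [Polynomial.eval_add, Polynomial.eval_mul, Polynomial.eval_sub,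
      Polynomial.eval_X, Polynomial.eval_C] at hev
    have hv0 : Polynomial.eval (v i) (littleQJacobi q a (q^2*b) N) = 0 :=
      LQJ.eval_root (LQJ.lqj_ne_zero hq0 hq1 ha0 ha1 hq2b N) hvr i
    rw [hv0, mul_zero, add_zero] at hev
    have hsgn : 0 < (-1:ℝ)^((i:ℕ)+1) * Polynomial.eval (v i) (littleQJacobi q a (q^2*b) (N+1)) := by
      apply LQJ.sign_eval_lqj hq0 hq1 ha0 ha1 hq2b (N+1) w hwr (v i) ((i:ℕ)+1) (by omega)
      · intro jj hjj
        have h1 := (hwv i i.isLt).1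
        have h2 : w jj ≤ w ⟨(i:ℕ), by omega⟩ := hwm.monotone (by rw [Fin.le_def]; simpa using by omega)
        linarith
      · intro jj hjj
        have h1 := (hwv i i.isLt).2
        have h2 : w ⟨(i:ℕ)+1, by omega⟩ ≤ w jj := hwm.monotone (by rw [Fin.le_def]; simpa using hjj)
        linarith
    exact LQJ.sign_keep_combine hev hsgn hA0 hK
  -- mesh
  set l : Fin (N+1) → ℝ := w with hl
  set r : Fin (N+1) → ℝ := fun i => if h : (i:ℕ) < N then v ⟨(i:ℕ), h⟩ else w i with hr
  obtain ⟨μ, hμm, hμr, hμp, hμl, hμgap⟩ :=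
    LQJ.workhorse f (N+1) (by omega) (LQJ.natDegree_lqj hq0 hq1 ha0 ha1 hb (N+1))
      (by rw [hf, LQJ.eval_zero_lqj (q := q) (a := a) b (ne_of_gt hq0)]; norm_num)
      l r (hwp _)
      (by
        intro i
        by_cases h : (i:ℕ) < N
        · have e2 : r i = v ⟨(i:ℕ), h⟩ := dif_pos h
          rw [e2]
          exact le_of_lt (hwv (i:ℕ) h).1
        · have e2 : r i = w i := dif_neg h
          rw [e2])
      (by
        intro i hi
        have him : i < N := by omega
        have e2 : r ⟨i, by omega⟩ = v ⟨i, him⟩ := dif_pos him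
        rw [e2]
        exact (hwv i him).2)
      (fun i => hsw i)
      (by
        intro i
        by_cases h : (i:ℕ) < N
        · have e2 : r i = v ⟨(i:ℕ), h⟩ := dif_pos h
          rw [e2]
          exact hsv ⟨(i:ℕ), h⟩
        · have e2 : r i = w i := dif_neg h
          rw [e2]
          exact hsw i)
  refine ⟨μ, w, hμm, hwm, hμp, hwp, LQJ.natDegree_lqj hq0 hq1 ha0 ha1 hb (N+1),
    LQJ.natDegree_lqj hq0 hq1 ha0 ha1 hq2b (N+1), hμr, hwr, hμl, ?_⟩
  intro i hi
  have him : i < N := by omega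
  have hgap := hμgap i hi
  have e2 : r ⟨i, by omega⟩ = v ⟨i, him⟩ := dif_pos him
  rw [e2] at hgap
  have h1 := (hwv i him).1
  linarith
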